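/- Suppose ι is a C^{1,γ}-embedding with constant C. Then δ : ℝⁿ → X* is Fréchet differentiable at every point x ∈ ℝⁿ, with derivative the continuous linear map Dδ_x : ℝⁿ → X* given by Dδ_x(v)(f) = (fderiv ℝ f̂ x) v; moreover one has the quantitative estimate ‖δ(x + v) − δ(x) − Dδ_x(v)‖_{X*} ≤ C‖v‖^{1+γ} for all v ∈ ℝⁿ. -/

import Mathlib

/-- `ι : X →ₗ[ℝ] ((Fin n → ℝ) → ℝ)` is a `C^{m,γ}`-embedding with constant `C`:
for every `f : X` the function `f̂ = ι f` is `m`-times continuously differentiable,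
all iterated derivatives up to order `m` are bounded by `C‖f‖`, and the `m`-th
iterated derivative is `γ`-Hölder with constant `C‖f‖`. -/
def IsCmGammaEmbedding {X : Type*} [NormedAddCommGroup X] [NormedSpace ℝ X]
    (n : ℕ) (ι : X →ₗ[ℝ] ((Fin n → ℝ) → ℝ)) (m : ℕ) (γ C : ℝ) : Prop :=
  ∀ f : X,
    ContDiff ℝ m (ι f) ∧
    (∀ i : ℕ, i ≤ m → ∀ x : Fin n → ℝ, ‖iteratedFDeriv ℝ i (ι f) x‖ ≤ C * ‖f‖) ∧
    ∀ x y : Fin n → ℝ,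
      ‖iteratedFDeriv ℝ m (ι f) x - iteratedFDeriv ℝ m (ι f) y‖ ≤ C * ‖f‖ * ‖x - y‖ ^ γ

/-- If `ι` is a `C^{1,γ}`-embedding with constant `C`, then `δ` is Fréchet
differentiable at every `x`, with derivative `Dδ_x(v)(f) = (fderiv ℝ f̂ x) v`, and
`‖δ(x + v) − δ(x) − Dδ_x(v)‖ ≤ C‖v‖^{1+γ}` for all `v`. -/
theorem delta_hasFDerivAt {X : Type*} [NormedAddCommGroup X] [NormedSpace ℝ X]
    [CompleteSpace X]
    {n : ℕ} (hn : 0 < n) {γ C : ℝ} (hγ : 0 < γ) (hγ1 : γ < 1) (hC : 0 ≤ C)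
    (ι : X →ₗ[ℝ] ((Fin n → ℝ) → ℝ))
    (hemb : IsCmGammaEmbedding n ι 1 γ C)
    (δ : (Fin n → ℝ) → (X →L[ℝ] ℝ))
    (hδ : ∀ (x : Fin n → ℝ) (f : X), δ x f = ι f x) :
    ∀ x : Fin n → ℝ, ∃ D : (Fin n → ℝ) →L[ℝ] (X →L[ℝ] ℝ),
      (∀ (v : Fin n → ℝ) (f : X), D v f = fderiv ℝ (ι f) x v) ∧
      HasFDerivAt δ D x ∧
      ∀ v : Fin n → ℝ, ‖δ (x + v) - δ x - D v‖ ≤ C * ‖v‖ ^ (1 + γ) := by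
  intro x
  have hdiff : ∀ f : X, Differentiable ℝ (ι f) := fun f =>
    (hemb f).1.differentiable (by norm_num)
  -- norm of fderiv equals norm of iteratedFDeriv 1
  have hnormeq : ∀ (f : X) (y : Fin n → ℝ),
      ‖fderiv ℝ (ι f) y‖ = ‖iteratedFDeriv ℝ 1 (ι f) y‖ := by
    intro f y
    rw [← norm_iteratedFDeriv_fderiv, norm_iteratedFDeriv_zero]
  have hiter : ∀ (f : X) (y : Fin n → ℝ),
      iteratedFDeriv ℝ 1 (ι f) y
        = (continuousMultilinearCurryFin1 ℝ (Fin n → ℝ) ℝ).symm (fderiv ℝ (ι f) y) := by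
    intro f y
    ext m
    simp [iteratedFDeriv_one_apply]
  have hbound : ∀ (f : X), ‖fderiv ℝ (ι f) x‖ ≤ C * ‖f‖ := by
    intro f
    rw [hnormeq]
    exact (hemb f).2.1 1 le_rfl x
  have hholder : ∀ (f : X) (y z : Fin n → ℝ),
      ‖fderiv ℝ (ι f) y - fderiv ℝ (ι f) z‖ ≤ C * ‖f‖ * ‖y - z‖ ^ γ := by
    intro f y z
    have h := (hemb f).2.2 y z
    rw [hiter, hiter, ← map_sub] at h
    rwa [← LinearIsometryEquiv.norm_map
      (continuousMultilinearCurryFin1 ℝ (Fin n → ℝ) ℝ).symm (fderiv ℝ (ι f) y - fderiv ℝ (ι f) z)]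
  -- the candidate derivative, as a bilinear map
  let B : X →L[ℝ] ((Fin n → ℝ) →L[ℝ] ℝ) :=
    LinearMap.mkContinuous
      { toFun := fun f => fderiv ℝ (ι f) x
        map_add' := by
          intro f g
          show fderiv ℝ (ι (f + g)) x = _
          have : ι (f + g) = fun y => ι f y + ι g y := by
            rw [map_add]; rfl
          rw [this, fderiv_fun_add (hdiff f x) (hdiff g x)]
        map_smul' := by
          intro c f
          show fderiv ℝ (ι (c • f)) x = _
          have : ι (c • f) = fun y => c • ι f y := by
            rw [map_smul]; rfl
          rw [this, fderiv_fun_const_smul (hdiff f x) c]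
          rfl }
      C hbound
  refine ⟨B.flip, fun v f => rfl, ?_⟩
  -- key quantitative bound, used also for differentiability
  have key : ∀ (v : Fin n → ℝ), ‖δ (x + v) - δ x - B.flip v‖ ≤ C * ‖v‖ ^ (1 + γ) := by
    intro v
    have hv0 : (0:ℝ) ≤ ‖v‖ := norm_nonneg v
    have hrpow : (0:ℝ) ≤ C * ‖v‖ ^ (1 + γ) :=
      mul_nonneg hC (Real.rpow_nonneg hv0 _)
    refine ContinuousLinearMap.opNorm_le_bound _ hrpow fun f => ?_
    have hpt : ‖ι f (x + v) - ι f x - fderiv ℝ (ι f) x v‖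
        ≤ C * ‖f‖ * ‖v‖ ^ γ * ‖v‖ := by
      have hconv : Convex ℝ (Metric.closedBall x ‖v‖) := convex_closedBall x ‖v‖
      have hd : ∀ y ∈ Metric.closedBall x ‖v‖,
          HasFDerivWithinAt (ι f) (fderiv ℝ (ι f) y) (Metric.closedBall x ‖v‖) y :=
        fun y _ => ((hdiff f y).hasFDerivAt).hasFDerivWithinAt
      have hb : ∀ y ∈ Metric.closedBall x ‖v‖,
          ‖fderiv ℝ (ι f) y - fderiv ℝ (ι f) x‖ ≤ C * ‖f‖ * ‖v‖ ^ γ := by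
        intro y hy
        refine (hholder f y x).trans ?_
        gcongr
        rwa [Metric.mem_closedBall, dist_eq_norm] at hy
      have hx : x ∈ Metric.closedBall x ‖v‖ := Metric.mem_closedBall_self hv0
      have hy : x + v ∈ Metric.closedBall x ‖v‖ := by
        simp [Metric.mem_closedBall, dist_eq_norm]
      have := hconv.norm_image_sub_le_of_norm_hasFDerivWithin_le' hd hb hx hy
      simpa using this
    have happ : (δ (x + v) - δ x - B.flip v) f
        = ι f (x + v) - ι f x - fderiv ℝ (ι f) x v := by
      simp [hδ]
      rfl
    rw [happ]
    calc ‖ι f (x + v) - ι f x - fderiv ℝ (ι f) x v‖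
        ≤ C * ‖f‖ * ‖v‖ ^ γ * ‖v‖ := hpt
      _ = C * ‖v‖ ^ (1 + γ) * ‖f‖ := by
          rw [Real.rpow_add' hv0 (by positivity), Real.rpow_one]
          ring
  constructor
  · rw [hasFDerivAt_iff_isLittleO_nhds_zero]
    rw [Asymptotics.isLittleO_iff]
    intro c hc
    have tend : Filter.Tendsto (fun h : Fin n → ℝ => C * ‖h‖ ^ γ) (nhds 0) (nhds 0) := by
      have h1 : Filter.Tendsto (fun h : Fin n → ℝ => ‖h‖) (nhds 0) (nhds 0) := by
        simpa using continuous_norm.tendsto (0 : Fin n → ℝ)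
      have h2 : Filter.Tendsto (fun t : ℝ => C * t ^ γ) (nhds 0) (nhds 0) := by
        have := (Real.continuousAt_rpow_const 0 γ (Or.inr hγ.le)).tendsto
        rw [Real.zero_rpow (ne_of_gt hγ)] at this
        simpa using (this.const_mul C)
      exact h2.comp h1
    filter_upwards [tend.eventually (eventually_le_nhds hc)] with v hv
    calc ‖δ (x + v) - δ x - B.flip v‖ ≤ C * ‖v‖ ^ (1 + γ) := key v
      _ = (C * ‖v‖ ^ γ) * ‖v‖ := by
          rw [Real.rpow_add' (norm_nonneg v) (by positivity), Real.rpow_one]; ring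
      _ ≤ c * ‖v‖ := by gcongr
  · exact key
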